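/- Let γ ∈ (0,1), τ > ν+1, β ∈ ℝ and λ ≥ 1. Then the Lebesgue measure of the set of frequency vectors in DC(γ,τ) violating the first-order Melnikov conditions satisfies |DC(γ,τ) ∖ Ω_γ| ≤ C γ, where the constant C depends only on ν, τ and the wave vectors j̄₁,…,j̄_ν (in particular C is independent of γ, λ and β). -/

import Mathlib

open scoped ENNReal NNReal BigOperators Classical
open MeasureTheory

namespace BetaPlane

abbrev Zn (n : ℕ) := Fin n → ℤ
abbrev Z2 := Fin 2 → ℤ
abbrev Idx (ν : ℕ) := Zn ν × Z2

/-- Euclidean norm of an integer vector. -/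
noncomputable def znorm {n : ℕ} (ℓ : Fin n → ℤ) : ℝ :=
  Real.sqrt (∑ i, ((ℓ i : ℝ)) ^ 2)

/-- Euclidean norm of a real vector. -/
noncomputable def rnorm {n : ℕ} (ω : Fin n → ℝ) : ℝ :=
  Real.sqrt (∑ i, (ω i) ^ 2)

/-- `⟨ℓ,j⟩ := max {1, |ℓ|, |j|}`. -/
noncomputable def wt {ν : ℕ} (p : Idx ν) : ℝ := max 1 (max (znorm p.1) (znorm p.2))

/-- `⟨ℓ⟩ := max {1, |ℓ|}`. -/
noncomputable def bwt {n : ℕ} (ℓ : Fin n → ℤ) : ℝ := max 1 (znorm ℓ)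

noncomputable def ωdot {n : ℕ} (ω : Fin n → ℝ) (ℓ : Fin n → ℤ) : ℝ := ∑ i, ω i * (ℓ i : ℝ)

noncomputable def mdot (m : Fin 2 → ℝ) (j : Z2) : ℝ := ∑ k, m k * (j k : ℝ)

/-- `π^⊤(ℓ) = ∑ k, ℓ k • j̄ k`. -/
def piT {ν : ℕ} (jb : Fin ν → Z2) (ℓ : Zn ν) : Z2 := fun k => ∑ i, ℓ i * jb i k

/-- `π(ς) = (j̄ 1 · ς, …, j̄ ν · ς)`. -/
noncomputable def piMap {ν : ℕ} (jb : Fin ν → Z2) (ς : Fin 2 → ℝ) : Fin ν → ℝ :=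
  fun i => ∑ k, (jb i k : ℝ) * ς k

/-- The wave vectors `j̄ 1, …, j̄ ν` span `ℝ²`. -/
def SpanningWaveVectors {ν : ℕ} (jb : Fin ν → Z2) : Prop :=
  ∃ i i' : Fin ν, jb i 0 * jb i' 1 - jb i 1 * jb i' 0 ≠ 0

/-- Quasi-periodic traveling wave, in Fourier coefficients:
`û(ℓ,j) = 0` whenever `π^⊤(ℓ) + j ≠ 0`. -/
def IsQPTW {ν : ℕ} (jb : Fin ν → Z2) (u : Idx ν → ℂ) : Prop :=
  ∀ p : Idx ν, piT jb p.1 + p.2 ≠ 0 → u p = 0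

/-- Zero average in `x`: the Fourier coefficients `û(ℓ,0)` vanish. -/
def ZeroAvgX {ν : ℕ} (u : Idx ν → ℂ) : Prop := ∀ ℓ : Zn ν, u (ℓ, 0) = 0

/-- Real-valuedness in Fourier coefficients. -/
def RealCoeff {ν : ℕ} (u : Idx ν → ℂ) : Prop :=
  ∀ p : Idx ν, u (-p.1, -p.2) = starRingEnd ℂ (u p)

/-- Sobolev norm `‖u‖_s` (as an extended real). -/
noncomputable def sobNorm {ν : ℕ} {E : Type*} [SeminormedAddCommGroup E]
    (s : ℝ) (u : Idx ν → E) : ℝ≥0∞ :=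
  (∑' p : Idx ν, ENNReal.ofReal (wt p ^ (2 * s)) * ((‖u p‖₊ : ℝ≥0∞)) ^ 2) ^ (1/2 : ℝ)

/-- `C^∞` smoothness = rapid decay of the Fourier coefficients. -/
def SmoothCoeff {ν : ℕ} (u : Idx ν → ℂ) : Prop := ∀ s : ℝ, sobNorm s u < ⊤

/-- Weighted (Lipschitz in the parameter `ω ∈ Λ`) Sobolev norm `‖u‖_s^{Lip(γ)}`. -/
noncomputable def sobNormLip {ν : ℕ} {E : Type*} [SeminormedAddCommGroup E]
    (γ : ℝ) (Λ : Set (Fin ν → ℝ)) (s : ℝ) (u : (Fin ν → ℝ) → Idx ν → E) : ℝ≥0∞ :=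
  (⨆ ω ∈ Λ, sobNorm s (u ω)) +
    ENNReal.ofReal γ * ⨆ ω₁ ∈ Λ, ⨆ ω₂ ∈ Λ,
      sobNorm (s - 1) (fun p => u ω₁ p - u ω₂ p) / ENNReal.ofReal (rnorm (ω₁ - ω₂))

/-- Symbol of `𝙻 = (−Δ)^{−1} ∂_{x₁}`. -/
noncomputable def Lfreq (j : Z2) : ℝ := if j = 0 then 0 else (j 0 : ℝ) / (znorm j) ^ 2

/-- The operator `𝙻 = (−Δ)^{−1} ∂_{x₁}` in Fourier coefficients. -/
noncomputable def Lsymb {ν : ℕ} (v : Idx ν → ℂ) : Idx ν → ℂ :=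
  fun p => Complex.I * (Lfreq p.2 : ℂ) * v p

/-- The operator `ω·∂_φ` in Fourier coefficients. -/
noncomputable def phiDer {ν : ℕ} (ω : Fin ν → ℝ) (v : Idx ν → ℂ) : Idx ν → ℂ :=
  fun p => Complex.I * ((ωdot ω p.1 : ℝ) : ℂ) * v p

/-- `B(j') ⋅ (i j'')` where `B(j') = (i/|j'|²)(−j'₂, j'₁)` is the Biot-Savart symbol. -/
noncomputable def bsDot (j' j'' : Z2) : ℂ :=
  if j' = 0 then 0
  else -((((-(j' 1 : ℝ)) * (j'' 0 : ℝ) + (j' 0 : ℝ) * (j'' 1 : ℝ)) / (znorm j') ^ 2 : ℝ) : ℂ)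

/-- Fourier coefficients of the nonlinearity `B[v]·∇w` (`B` the Biot-Savart operator). -/
noncomputable def nonlin {ν : ℕ} (v w : Idx ν → ℂ) : Idx ν → ℂ :=
  fun p => ∑' q : Idx ν, bsDot q.2 (p.2 - q.2) * v q * w (p.1 - q.1, p.2 - q.2)

/-- Fourier coefficients of the (vector valued) Biot-Savart velocity field `B[v]`. -/
noncomputable def biotSavartV {ν : ℕ} (v : Idx ν → ℂ) : Idx ν → Fin 2 → ℂ :=
  fun p k => if p.2 = 0 then 0 else
    Complex.I * ((((if k = 0 then -(p.2 1) else p.2 0 : ℤ) : ℝ) / (znorm p.2) ^ 2 : ℝ) : ℂ) * v p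

/-- The reference annulus `Ω := {1 ≤ |ω| ≤ 2}`. -/
def OmegaSet (ν : ℕ) : Set (Fin ν → ℝ) := {ω | 1 ≤ rnorm ω ∧ rnorm ω ≤ 2}

/-- Diophantine vectors `DC(γ,τ)`. -/
def DCset (ν : ℕ) (γ τ : ℝ) : Set (Fin ν → ℝ) :=
  {ω ∈ OmegaSet ν | ∀ ℓ : Zn ν, ℓ ≠ 0 → γ * bwt ℓ ^ (-τ) ≤ |ωdot ω ℓ|}

/-- The set `Ω_γ` of first order Melnikov non-resonance conditions. -/
def MelnikovSet {ν : ℕ} (jb : Fin ν → Z2) (β lam γ τ : ℝ) : Set (Fin ν → ℝ) :=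
  {ω ∈ DCset ν γ τ | ∀ (ℓ : Zn ν) (j : Z2), (ℓ, j) ≠ (0, 0) → piT jb ℓ + j = 0 →
    lam * γ * bwt ℓ ^ (-τ) ≤ |lam * ωdot ω ℓ + β * Lfreq j|}

/-- Matrix representation `R̂(ℓ)_j^{j'}` of (φ-dependent families of) linear operators. -/
abbrev OpMat (ν : ℕ) := Zn ν → Z2 → Z2 → ℂ

/-- The decay norm `|R|_{m,s}`. -/
noncomputable def decayNorm {ν : ℕ} (m s : ℝ) (R : OpMat ν) : ℝ≥0∞ :=
  ⨆ j' : Z2, ENNReal.ofReal (bwt j' ^ (-m)) *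
    (∑' q : Idx ν, ENNReal.ofReal (wt (q.1, q.2 - j') ^ (2 * s)) *
      ((‖R q.1 q.2 j'‖₊ : ℝ≥0∞)) ^ 2) ^ (1/2 : ℝ)

/-- The weighted decay norm `|R|_{m,s}^{Lip(γ)}` of a family `R(ω)`, `ω ∈ Λ`. -/
noncomputable def decayNormLip {ν : ℕ} (γ : ℝ) (Λ : Set (Fin ν → ℝ)) (m s : ℝ)
    (R : (Fin ν → ℝ) → OpMat ν) : ℝ≥0∞ :=
  (⨆ ω ∈ Λ, decayNorm m s (R ω)) +
    ENNReal.ofReal γ * ⨆ ω₁ ∈ Λ, ⨆ ω₂ ∈ Λ,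
      decayNorm m (s - 1) (fun ℓ j j' => R ω₁ ℓ j j' - R ω₂ ℓ j j') /
        ENNReal.ofReal (rnorm (ω₁ - ω₂))

/-- Composition of operators at the level of matrices. -/
noncomputable def opComp {ν : ℕ} (R Q : OpMat ν) : OpMat ν :=
  fun ℓ j j' => ∑' q : Idx ν, R (ℓ - q.1) j q.2 * Q q.1 q.2 j'

/-- Action of an operator (given by its matrix) on Fourier coefficients. -/
noncomputable def opApply {ν : ℕ} (R : OpMat ν) (u : Idx ν → ℂ) : Idx ν → ℂ :=
  fun p => ∑' q : Idx ν, R (p.1 - q.1) p.2 q.2 * u q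

/-- Matrix of the identity operator. -/
noncomputable def idMat (ν : ℕ) : OpMat ν := fun ℓ j j' => if ℓ = 0 ∧ j = j' then 1 else 0

/-- Momentum preserving operator, in matrix form. -/
def MomPresMat {ν : ℕ} (jb : Fin ν → Z2) (R : OpMat ν) : Prop :=
  ∀ ℓ j j', R ℓ j j' ≠ 0 → piT jb ℓ + j = j'

/-- `n`-fold composition `R^n`. -/
noncomputable def opPow {ν : ℕ} (R : OpMat ν) : ℕ → OpMat ν
  | 0 => idMat ν
  | n + 1 => opComp R (opPow R n)

/-- Exponential `exp(R) = Id + ∑_{n ≥ 1} R^n / n!`. -/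
noncomputable def expMat {ν : ℕ} (R : OpMat ν) : OpMat ν :=
  fun ℓ j j' => idMat ν ℓ j j' +
    ∑' n : ℕ, ((Nat.factorial (n + 1) : ℂ))⁻¹ * opPow R (n + 1) ℓ j j'


namespace MelAux

lemma summable_nat_max (s : ℝ) (hs : 1 < s) :
    Summable (fun n : ℕ => (max 1 (n:ℝ)) ^ (-s)) := by
  have h1 : Summable (fun n : ℕ => ((n:ℝ)+1) ^ (-s)) := by
    have := (summable_nat_add_iff (f := fun n : ℕ => (n:ℝ) ^ (-s)) 1).2
      (Real.summable_nat_rpow.2 (by linarith))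
    simpa [Nat.cast_add] using this
  refine Summable.of_nonneg_of_le (fun n => by positivity) (fun n => ?_)
    (h1.mul_left ((2:ℝ)^s))
  have hmax : ((n:ℝ)+1)/2 ≤ max 1 (n:ℝ) := by
    rcases Nat.eq_zero_or_pos n with h | h
    · simp [h]; norm_num
    · have : (1:ℝ) ≤ n := by exact_mod_cast h
      calc ((n:ℝ)+1)/2 ≤ n := by linarith
        _ ≤ max 1 (n:ℝ) := le_max_right _ _
  calc (max 1 (n:ℝ)) ^ (-s) ≤ (((n:ℝ)+1)/2) ^ (-s) := by
        apply Real.rpow_le_rpow_of_nonpos (by positivity) hmax (by linarith)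
    _ = (2:ℝ)^s * ((n:ℝ)+1) ^ (-s) := by
        rw [Real.div_rpow (by positivity) (by norm_num), Real.rpow_neg (by norm_num : (0:ℝ) ≤ 2)]
        field_simp

lemma summable_int_max (s : ℝ) (hs : 1 < s) :
    Summable (fun m : ℤ => (max 1 |(m:ℝ)|) ^ (-s)) := by
  rw [summable_int_iff_summable_nat_and_neg]
  constructor <;> · simpa using summable_nat_max s hs

lemma tsum_int_max_lt_top (s : ℝ) (hs : 1 < s) :
    (∑' m : ℤ, ENNReal.ofReal ((max 1 |(m:ℝ)|) ^ (-s))) < ⊤ := by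
  rw [← ENNReal.ofReal_tsum_of_nonneg (fun m => by positivity) (summable_int_max s hs)]
  exact ENNReal.ofReal_lt_top

lemma tsum_pi_prod {n : ℕ} (g : ℤ → ℝ≥0∞) :
    (∑' ℓ : Fin n → ℤ, ∏ i, g (ℓ i)) = (∑' m : ℤ, g m) ^ n := by
  induction n with
  | zero =>
    simp only [Finset.univ_eq_empty, Finset.prod_empty, pow_zero]
    exact tsum_eq_single (fun i => i.elim0) (fun b hb => (hb (funext fun i => i.elim0)).elim)
  | succ n ih =>
    rw [← (Fin.consEquiv (fun _ : Fin (n+1) => ℤ)).tsum_eq]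
    simp only [Fin.consEquiv_apply]
    rw [ENNReal.tsum_prod']
    simp only [Fin.prod_univ_succ, Fin.cons_zero, Fin.cons_succ]
    rw [pow_succ]
    calc (∑' (a : ℤ) (b : Fin n → ℤ), g a * ∏ i, g (b i))
        = ∑' (a : ℤ), g a * ∑' (b : Fin n → ℤ), ∏ i, g (b i) := by
          congr 1; ext a; rw [ENNReal.tsum_mul_left]
      _ = (∑' m : ℤ, g m) * (∑' m : ℤ, g m) ^ n := by rw [ENNReal.tsum_mul_right, ih]
      _ = (∑' m : ℤ, g m) ^ n * (∑' m : ℤ, g m) := mul_comm _ _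


lemma slab_measure {m : ℕ} (i : Fin (m+1)) (a : Fin (m+1) → ℤ) (hai : a i ≠ 0)
    (c ε : ℝ) (hε : 0 ≤ ε) :
    volume {ω : Fin (m+1) → ℝ | (∀ k, |ω k| ≤ 2) ∧ |(∑ k, ω k * (a k : ℝ)) + c| ≤ ε}
      ≤ ENNReal.ofReal (2*ε) * (ENNReal.ofReal 4) ^ m := by
  set S := {ω : Fin (m+1) → ℝ | (∀ k, |ω k| ≤ 2) ∧ |(∑ k, ω k * (a k : ℝ)) + c| ≤ ε} with hSdef
  have hS : MeasurableSet S := by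
    rw [hSdef, Set.setOf_and]
    apply MeasurableSet.inter
    · rw [Set.setOf_forall]
      exact MeasurableSet.iInter fun k =>
        measurableSet_le ((measurable_pi_apply k).abs) measurable_const
    · exact measurableSet_le
        (((Finset.measurable_sum _ fun k _ => (measurable_pi_apply k).mul_const _).add_const c).abs)
        measurable_const
  have hai1 : (1:ℝ) ≤ |(a i : ℝ)| := by
    have := Int.one_le_abs hai
    exact_mod_cast this
  have hai0 : (0:ℝ) < |(a i : ℝ)| := lt_of_lt_of_le one_pos hai1
  set e := MeasurableEquiv.piFinSuccAbove (fun _ : Fin (m+1) => ℝ) i with he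
  have hmp := measurePreserving_piFinSuccAbove (fun _ : Fin (m+1) => (volume : Measure ℝ)) i
  set T := e.symm ⁻¹' S with hTdef
  have hT : MeasurableSet T := e.symm.measurable hS
  have hsymm : ∀ (x : ℝ) (y : Fin m → ℝ),
      e.symm (x, y) = Fin.insertNth (α := fun _ : Fin (m+1) => ℝ) i x y := fun x y => rfl
  have hES : e ⁻¹' T = S := by
    ext ω; simp [hTdef]
  have key : volume S = ((volume : Measure ℝ).prod (Measure.pi fun _ : Fin m => volume)) T := by
    rw [← hES, volume_pi]
    exact hmp.measure_preimage hT.nullMeasurableSet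
  rw [key, Measure.prod_apply_symm hT]
  set box : Set (Fin m → ℝ) := Set.pi Set.univ (fun _ => Set.Icc (-2:ℝ) 2) with hbox
  have hslice : ∀ y : Fin m → ℝ, volume ((fun x => (x, y)) ⁻¹' T)
      ≤ Set.indicator box (fun _ => ENNReal.ofReal (2*ε)) y := by
    intro y
    by_cases hy : y ∈ box
    · rw [Set.indicator_of_mem hy]
      set D := (∑ k, y k * (a (i.succAbove k) : ℝ)) + c with hD
      have hsub : ((fun x => (x, y)) ⁻¹' T) ⊆
          Metric.closedBall (-(D / (a i : ℝ))) (ε / |(a i : ℝ)|) := by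
        intro x hx
        have hmem : Fin.insertNth (α := fun _ : Fin (m+1) => ℝ) i x y ∈ S := by
          have h' : e.symm (x, y) ∈ S := hx
          rwa [hsymm] at h'
        have hsum : (∑ k, (Fin.insertNth (α := fun _ : Fin (m+1) => ℝ) i x y) k * (a k : ℝ))
            = x * (a i : ℝ) + (D - c) := by
          rw [Fin.sum_univ_succAbove
            (fun k => (Fin.insertNth (α := fun _ : Fin (m+1) => ℝ) i x y) k * (a k : ℝ)) i]
          simp [hD]
        have habs : |x * (a i : ℝ) + D| ≤ ε := by
          have := hmem.2
          rw [hsum] at this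
          convert this using 2
          ring
        rw [Metric.mem_closedBall, Real.dist_eq, sub_neg_eq_add, le_div_iff₀ hai0, ← abs_mul]
        have heq : (x + D / (a i:ℝ)) * (a i:ℝ) = x * (a i:ℝ) + D := by
          field_simp
        rw [heq]; exact habs
      calc volume ((fun x => (x, y)) ⁻¹' T) ≤ volume (Metric.closedBall (-(D / (a i : ℝ))) (ε / |(a i : ℝ)|)) :=
            measure_mono hsub
        _ = ENNReal.ofReal (2 * (ε / |(a i : ℝ)|)) := Real.volume_closedBall _ _
        _ ≤ ENNReal.ofReal (2 * ε) := by
            apply ENNReal.ofReal_le_ofReal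
            have : ε / |(a i : ℝ)| ≤ ε := by
              rw [div_le_iff₀ hai0]; nlinarith
            linarith
    · rw [Set.indicator_of_notMem hy]
      have : ((fun x => (x, y)) ⁻¹' T) = ∅ := by
        ext x
        simp only [Set.mem_preimage, Set.mem_empty_iff_false, iff_false]
        intro hx
        have hmem : Fin.insertNth (α := fun _ : Fin (m+1) => ℝ) i x y ∈ S := by
          have h' : e.symm (x, y) ∈ S := hx
          rwa [hsymm] at h'
        apply hy
        intro k _
        have := hmem.1 (i.succAbove k)
        rw [Fin.insertNth_apply_succAbove] at this
        exact abs_le.1 this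
      rw [this, measure_empty]
  calc (∫⁻ y, volume ((fun x => (x, y)) ⁻¹' T) ∂(Measure.pi fun _ : Fin m => volume))
      ≤ ∫⁻ y, Set.indicator box (fun _ => ENNReal.ofReal (2*ε)) y ∂(Measure.pi fun _ : Fin m => volume) :=
        lintegral_mono hslice
    _ = ENNReal.ofReal (2*ε) * (Measure.pi fun _ : Fin m => volume) box := by
        rw [lintegral_indicator (MeasurableSet.univ_pi fun _ => measurableSet_Icc) _,
          setLIntegral_const]
    _ = ENNReal.ofReal (2*ε) * (ENNReal.ofReal 4) ^ m := by
        rw [hbox, Measure.pi_pi]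
        congr 1
        simp [Real.volume_Icc]
        norm_num

end MelAux

/-- measure estimate of Lemma 3.3: `|DC(γ,τ) ∖ Ω_γ| ≤ C γ`, with a
constant `C` depending only on `ν`, `τ` and the wave vectors `j̄₁,…,j̄_ν` (in particular,
independent of `γ`, `λ` and `β`). -/
theorem melnikov_measure_estimate
    {ν : ℕ} (hν : 2 ≤ ν) (jb : Fin ν → Z2) (hjb : SpanningWaveVectors jb)
    (τ : ℝ) (hτ : (ν : ℝ) + 1 < τ) :
    ∃ C : ℝ, 0 < C ∧
      ∀ γ β lam : ℝ, 0 < γ → γ < 1 → 1 ≤ lam →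
        MeasureTheory.volume (DCset ν γ τ \ MelnikovSet jb β lam γ τ)
          ≤ ENNReal.ofReal (C * γ) := by
  classical
  obtain ⟨m, rfl⟩ : ∃ m, ν = m + 1 := ⟨ν - 1, by omega⟩
  set s : ℝ := τ / (m + 1 : ℝ) with hsdef
  have hm1 : (0:ℝ) < (m + 1 : ℝ) := by positivity
  have hs : 1 < s := by
    rw [hsdef, lt_div_iff₀ hm1]
    push_cast at hτ ⊢
    linarith
  have hτ0 : 0 < τ := by nlinarith
  set g : ℤ → ℝ≥0∞ := fun k => ENNReal.ofReal ((max 1 |(k:ℝ)|) ^ (-s)) with hgdef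
  set T : ℝ≥0∞ := (∑' k : ℤ, g k) ^ (m + 1) with hTdef
  have hT : T < ⊤ := ENNReal.pow_lt_top (MelAux.tsum_int_max_lt_top s hs)
  refine ⟨2 * 4 ^ m * (T.toReal + 1), by positivity, ?_⟩
  intro γ β lam hγ hγ1 hlam
  have hlam0 : (0:ℝ) < lam := lt_of_lt_of_le one_pos hlam
  -- the family of "bad" slabs
  set G : Zn (m+1) → Set (Fin (m+1) → ℝ) := fun ℓ =>
    if ℓ = 0 then ∅ else
      {ω : Fin (m+1) → ℝ | (∀ k, |ω k| ≤ 2) ∧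
        |(∑ k, ω k * (ℓ k : ℝ)) + β * Lfreq (-(piT jb ℓ)) / lam| ≤ γ * bwt ℓ ^ (-τ)} with hGdef
  -- inclusion in the union of slabs
  have hsub : DCset (m+1) γ τ \ MelnikovSet jb β lam γ τ ⊆ ⋃ ℓ : Zn (m+1), G ℓ := by
    rintro ω ⟨hDC, hM⟩
    have hP : ¬ ∀ (ℓ : Zn (m+1)) (j : Z2), (ℓ, j) ≠ (0, 0) → piT jb ℓ + j = 0 →
        lam * γ * bwt ℓ ^ (-τ) ≤ |lam * ωdot ω ℓ + β * Lfreq j| := fun h => hM ⟨hDC, h⟩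
    push_neg at hP
    obtain ⟨ℓ, j, hne, hmom, hlt⟩ := hP
    have hl0 : ℓ ≠ 0 := by
      rintro rfl
      have hpi : piT jb 0 = 0 := by funext k; simp [piT]
      rw [hpi, zero_add] at hmom
      exact hne (by rw [hmom])
    have hj : j = -(piT jb ℓ) := by
      rw [eq_neg_iff_add_eq_zero, add_comm]
      exact hmom
    refine Set.mem_iUnion.2 ⟨ℓ, ?_⟩
    simp only [hGdef, if_neg hl0, Set.mem_setOf_eq]
    constructor
    · intro k
      have h1 : |ω k| ≤ rnorm ω := by
        rw [rnorm, ← Real.sqrt_sq_eq_abs]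
        exact Real.sqrt_le_sqrt (Finset.single_le_sum (fun j _ => sq_nonneg (ω j))
          (Finset.mem_univ k))
      exact h1.trans hDC.1.2
    · have habs : lam * |ωdot ω ℓ + β * Lfreq j / lam| = |lam * ωdot ω ℓ + β * Lfreq j| := by
        have h0 : lam * (ωdot ω ℓ + β * Lfreq j / lam) = lam * ωdot ω ℓ + β * Lfreq j := by
          field_simp
        calc lam * |ωdot ω ℓ + β * Lfreq j / lam|
            = |lam * (ωdot ω ℓ + β * Lfreq j / lam)| := by rw [abs_mul, abs_of_pos hlam0]

          _ = |lam * ωdot ω ℓ + β * Lfreq j| := by rw [h0]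
      have : |ωdot ω ℓ + β * Lfreq j / lam| ≤ γ * bwt ℓ ^ (-τ) := by
        have h2 : lam * |ωdot ω ℓ + β * Lfreq j / lam| < lam * (γ * bwt ℓ ^ (-τ)) := by
          rw [habs]; calc |lam * ωdot ω ℓ + β * Lfreq j| < lam * γ * bwt ℓ ^ (-τ) := hlt
            _ = lam * (γ * bwt ℓ ^ (-τ)) := by ring
        exact le_of_lt ((mul_lt_mul_iff_right₀ hlam0).1 h2)
      rw [← hj]
      simpa [ωdot] using this
  -- per-slab measure bound
  have hGbound : ∀ ℓ : Zn (m+1), volume (G ℓ) ≤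
      ENNReal.ofReal (2 * (γ * bwt ℓ ^ (-τ))) * (ENNReal.ofReal 4) ^ m := by
    intro ℓ
    simp only [hGdef]
    by_cases hl : ℓ = 0
    · simp [hl]
    · rw [if_neg hl]
      obtain ⟨i, hi⟩ := Function.ne_iff.1 hl
      have hb : (0:ℝ) < bwt ℓ := lt_of_lt_of_le one_pos (le_max_left _ _)
      exact MelAux.slab_measure i ℓ hi _ _
        (mul_nonneg hγ.le (Real.rpow_nonneg hb.le _))
  -- pointwise bound for the weights
  have hpt : ∀ ℓ : Zn (m+1), ENNReal.ofReal (bwt ℓ ^ (-τ)) ≤ ∏ i, g (ℓ i) := by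
    intro ℓ
    have hb1 : (1:ℝ) ≤ bwt ℓ := le_max_left _ _
    have hb0 : (0:ℝ) < bwt ℓ := lt_of_lt_of_le one_pos hb1
    have hfac : ∀ i, max 1 |((ℓ i : ℤ) : ℝ)| ≤ bwt ℓ := by
      intro i
      apply max_le hb1
      have : |((ℓ i : ℤ) : ℝ)| ≤ znorm ℓ := by
        rw [znorm, ← Real.sqrt_sq_eq_abs]
        exact Real.sqrt_le_sqrt (Finset.single_le_sum
          (fun j _ => sq_nonneg ((ℓ j : ℝ))) (Finset.mem_univ i))
      exact this.trans (le_max_right _ _)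
    have hP0 : (0:ℝ) < ∏ i, max 1 |((ℓ i : ℤ) : ℝ)| :=
      Finset.prod_pos fun i _ => lt_of_lt_of_le one_pos (le_max_left _ _)
    have hPle : (∏ i, max 1 |((ℓ i : ℤ) : ℝ)|) ≤ bwt ℓ ^ (m + 1) := by
      calc (∏ i, max 1 |((ℓ i : ℤ) : ℝ)|) ≤ ∏ _i : Fin (m+1), bwt ℓ :=
            Finset.prod_le_prod (fun i _ => le_of_lt (lt_of_lt_of_le one_pos (le_max_left _ _)))
              (fun i _ => hfac i)
        _ = bwt ℓ ^ (m + 1) := by rw [Finset.prod_const, Finset.card_univ, Fintype.card_fin]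
    have hkey : bwt ℓ ^ (-τ) ≤ ∏ i, (max 1 |((ℓ i : ℤ) : ℝ)|) ^ (-s) := by
      have h1 : (bwt ℓ ^ (m + 1) : ℝ) ^ (-s) ≤ (∏ i, max 1 |((ℓ i : ℤ) : ℝ)|) ^ (-s) :=
        Real.rpow_le_rpow_of_nonpos hP0 hPle (by linarith)
      have h2 : (bwt ℓ ^ (m + 1) : ℝ) ^ (-s) = bwt ℓ ^ (-τ) := by
        rw [← Real.rpow_natCast (bwt ℓ) (m + 1), ← Real.rpow_mul (le_of_lt hb0)]
        congr 1
        rw [hsdef]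
        push_cast
        field_simp
      have h3 : (∏ i, max 1 |((ℓ i : ℤ) : ℝ)|) ^ (-s)
          = ∏ i, (max 1 |((ℓ i : ℤ) : ℝ)|) ^ (-s) :=
        (Real.finset_prod_rpow _ _ (fun i _ => by positivity) _).symm
      rw [← h2, ← h3]
      exact h1
    calc ENNReal.ofReal (bwt ℓ ^ (-τ))
        ≤ ENNReal.ofReal (∏ i, (max 1 |((ℓ i : ℤ) : ℝ)|) ^ (-s)) :=
          ENNReal.ofReal_le_ofReal hkey
      _ = ∏ i, ENNReal.ofReal ((max 1 |((ℓ i : ℤ) : ℝ)|) ^ (-s)) :=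
          ENNReal.ofReal_prod_of_nonneg (fun i _ => by positivity)
      _ = ∏ i, g (ℓ i) := rfl
  -- putting everything together
  have hsum : volume (DCset (m+1) γ τ \ MelnikovSet jb β lam γ τ)
      ≤ (ENNReal.ofReal 4) ^ m * ENNReal.ofReal (2 * γ) * T := by
    calc volume (DCset (m+1) γ τ \ MelnikovSet jb β lam γ τ)
        ≤ volume (⋃ ℓ : Zn (m+1), G ℓ) := measure_mono hsub
      _ ≤ ∑' ℓ : Zn (m+1), volume (G ℓ) := measure_iUnion_le _
      _ ≤ ∑' ℓ : Zn (m+1), ENNReal.ofReal (2 * (γ * bwt ℓ ^ (-τ))) * (ENNReal.ofReal 4) ^ m :=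
          ENNReal.tsum_le_tsum hGbound
      _ ≤ ∑' ℓ : Zn (m+1), (ENNReal.ofReal 4) ^ m * ENNReal.ofReal (2 * γ) * ∏ i, g (ℓ i) := by
          apply ENNReal.tsum_le_tsum
          intro ℓ
          have : ENNReal.ofReal (2 * (γ * bwt ℓ ^ (-τ)))
              = ENNReal.ofReal (2 * γ) * ENNReal.ofReal (bwt ℓ ^ (-τ)) := by
            rw [← ENNReal.ofReal_mul (by positivity : (0:ℝ) ≤ 2 * γ), mul_assoc]
          rw [this]
          calc ENNReal.ofReal (2 * γ) * ENNReal.ofReal (bwt ℓ ^ (-τ)) * (ENNReal.ofReal 4) ^ m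
              ≤ ENNReal.ofReal (2 * γ) * (∏ i, g (ℓ i)) * (ENNReal.ofReal 4) ^ m := by
                gcongr
                exact hpt ℓ
            _ = (ENNReal.ofReal 4) ^ m * ENNReal.ofReal (2 * γ) * ∏ i, g (ℓ i) := by ring
      _ = (ENNReal.ofReal 4) ^ m * ENNReal.ofReal (2 * γ) * ∑' ℓ : Zn (m+1), ∏ i, g (ℓ i) :=
          ENNReal.tsum_mul_left
      _ = (ENNReal.ofReal 4) ^ m * ENNReal.ofReal (2 * γ) * T := by
          rw [MelAux.tsum_pi_prod g, hTdef]
  refine hsum.trans ?_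
  have hTle : T ≤ ENNReal.ofReal (T.toReal + 1) :=
    le_trans (le_of_eq (ENNReal.ofReal_toReal hT.ne).symm)
      (ENNReal.ofReal_le_ofReal (by linarith))
  calc (ENNReal.ofReal 4) ^ m * ENNReal.ofReal (2 * γ) * T
      ≤ (ENNReal.ofReal 4) ^ m * ENNReal.ofReal (2 * γ) * ENNReal.ofReal (T.toReal + 1) := by
        gcongr
    _ = ENNReal.ofReal (4 ^ m * (2 * γ) * (T.toReal + 1)) := by
        rw [← ENNReal.ofReal_pow (by norm_num : (0:ℝ) ≤ 4), ← ENNReal.ofReal_mul (by positivity),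
          ← ENNReal.ofReal_mul (by positivity)]
    _ ≤ ENNReal.ofReal (2 * 4 ^ m * (T.toReal + 1) * γ) := by
        apply ENNReal.ofReal_le_ofReal
        have hTnn : (0:ℝ) ≤ T.toReal := ENNReal.toReal_nonneg
        nlinarith [pow_pos (by norm_num : (0:ℝ) < 4) m]

end BetaPlane
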